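/- arXiv:1711.06936 — 4 statements merged into one kernel-verified Lean document; each statement's English description precedes it below -/
import Mathlib

section
/- In any Hausdorff field H (a subfield of the ring C of germs at +∞ of continuous real functions), the dominance relation ≼ is total: for all f, g ∈ H, either f ≼ g or g ≼ f. -/
open Filter Set

abbrev GermAtTop : Type := Filter.Germ (Filter.atTop : Filter ℝ) ℝ

def IsContinuousGerm (f : GermAtTop) : Prop :=
  ∃ g : ℝ → ℝ, (g : GermAtTop) = f ∧ ∃ a : ℝ, ContinuousOn g (Set.Ioi a)

def ContinuousGerms : Subring GermAtTop where
  carrier := {f | IsContinuousGerm f}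
  zero_mem' := ⟨(fun _ => 0), rfl, 0, continuousOn_const⟩
  one_mem' := ⟨(fun _ => 1), rfl, 0, continuousOn_const⟩
  add_mem' := by
    rintro f g ⟨F, hF, a, ha⟩ ⟨G, hG, b, hb⟩
    exact ⟨F + G, by rw [← hF, ← hG]; rfl, max a b,
      (ha.mono (Set.Ioi_subset_Ioi (le_max_left a b))).add
      (hb.mono (Set.Ioi_subset_Ioi (le_max_right a b)))⟩
  neg_mem' := by
    rintro f ⟨F, hF, a, ha⟩
    exact ⟨-F, by rw [← hF]; rfl, a, ha.neg⟩
  mul_mem' := by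
    rintro f g ⟨F, hF, a, ha⟩ ⟨G, hG, b, hb⟩
    exact ⟨F * G, by rw [← hF, ← hG]; rfl, max a b,
      (ha.mono (Set.Ioi_subset_Ioi (le_max_left a b))).mul
      (hb.mono (Set.Ioi_subset_Ioi (le_max_right a b)))⟩

def Dominates (f g : GermAtTop) : Prop :=
  ∃ c : ℝ, 0 < c ∧ ∃ F G : ℝ → ℝ, (F : GermAtTop) = f ∧ (G : GermAtTop) = g ∧
    ∀ᶠ t in atTop, |F t| ≤ c * |G t|

/-- A Hausdorff field: a subfield of the ring C of germs at +∞ of continuous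
real-valued functions. -/
structure HausdorffField where
  toSubring : Subring GermAtTop
  cont : ∀ f ∈ toSubring, IsContinuousGerm f
  inv_mem : ∀ f ∈ toSubring, f ≠ 0 → ∃ g ∈ toSubring, f * g = 1


private lemma germ_eventually_ne (H : HausdorffField) {q : GermAtTop}
    (hq : q ∈ H.toSubring) (hq0 : q ≠ 0) {Q : ℝ → ℝ} (hQ : (Q : GermAtTop) = q) :
    ∀ᶠ t in atTop, Q t ≠ 0 := by
  obtain ⟨k, hk, hqk⟩ := H.inv_mem q hq hq0
  obtain ⟨K, hK, -⟩ := H.cont k hk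
  have h1 : (↑(Q * K) : GermAtTop) = ↑(1 : ℝ → ℝ) := by
    rw [Germ.coe_mul, hQ, hK, hqk, Germ.coe_one]
  have h2 : (Q * K : ℝ → ℝ) =ᶠ[atTop] (1 : ℝ → ℝ) := Germ.coe_eq.mp h1
  filter_upwards [h2] with t ht h0
  simp [Pi.mul_apply, h0] at ht

/-- In a Hausdorff field the dominance relation is total. -/
theorem hausdorffField_dominates_total (H : HausdorffField) :
    ∀ f ∈ H.toSubring, ∀ g ∈ H.toSubring, Dominates f g ∨ Dominates g f := by
  intro f hf g hg
  obtain ⟨F, hF, aF, hFc⟩ := H.cont f hf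
  obtain ⟨G, hG, aG, hGc⟩ := H.cont g hg
  by_cases hf0 : f = 0
  · left
    refine ⟨1, one_pos, (fun _ => 0), G, ?_, hG, ?_⟩
    · rw [hf0]; rfl
    · filter_upwards with t; simp [abs_nonneg]
  by_cases hg0 : g = 0
  · right
    refine ⟨1, one_pos, (fun _ => 0), F, ?_, hF, ?_⟩
    · rw [hg0]; rfl
    · filter_upwards with t; simp [abs_nonneg]
  obtain ⟨gi, hgi, hggi⟩ := H.inv_mem g hg hg0
  obtain ⟨K, hK, aK, hKc⟩ := H.cont gi hgi
  set Φ : ℝ → ℝ := fun t => F t * K t with hΦdef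
  have hΦg : (Φ : GermAtTop) = f * gi := by rw [← hF, ← hK]; rfl
  have hGK : ∀ᶠ t in atTop, G t * K t = 1 := by
    have h1 : (↑(G * K) : GermAtTop) = ↑(1 : ℝ → ℝ) := by
      rw [Germ.coe_mul, hG, hK, hggi, Germ.coe_one]
    exact Germ.coe_eq.mp h1
  have hFΦG : ∀ᶠ t in atTop, F t = Φ t * G t := by
    filter_upwards [hGK] with t ht
    calc F t = F t * (G t * K t) := by rw [ht]; ring
      _ = Φ t * G t := by simp only [hΦdef]; ring
  have key : (∀ᶠ t in atTop, |Φ t| ≤ 1) ∨ (∀ᶠ t in atTop, 1 ≤ |Φ t|) := by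
    by_contra hcon
    push_neg at hcon
    obtain ⟨h1, h2⟩ := hcon
    have h1' : ∃ᶠ t in atTop, 1 < |Φ t| := h1
    have h2' : ∃ᶠ t in atTop, |Φ t| < 1 := h2
    set b : ℝ := max aF aK with hb
    have hΦc : ContinuousOn Φ (Ioi b) := by
      exact (hFc.mono (Ioi_subset_Ioi (le_max_left _ _))).mul
        (hKc.mono (Ioi_subset_Ioi (le_max_right _ _)))
    -- frequently |Φ t| = 1
    have hfreq : ∃ᶠ t in atTop, Φ t ^ 2 - 1 = 0 := by
      rw [Filter.frequently_atTop]
      intro x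
      obtain ⟨t₁, ht₁x, ht₁⟩ := Filter.frequently_atTop.mp h1' (max x (b + 1))
      obtain ⟨t₂, ht₂x, ht₂⟩ := Filter.frequently_atTop.mp h2' (max x (b + 1))
      have hsub : uIcc t₁ t₂ ⊆ Ioi b := by
        intro s hs
        have : min t₁ t₂ ≤ s := hs.1
        have hbt1 : b + 1 ≤ t₁ := le_trans (le_max_right _ _) ht₁x
        have hbt2 : b + 1 ≤ t₂ := le_trans (le_max_right _ _) ht₂x
        have : b + 1 ≤ s := le_trans (le_min hbt1 hbt2) hs.1
        simp only [mem_Ioi]; linarith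
      have hcΦ : ContinuousOn (fun t => |Φ t|) (uIcc t₁ t₂) :=
        (hΦc.mono hsub).abs
      have hmem : (1 : ℝ) ∈ uIcc (|Φ t₁|) (|Φ t₂|) := by
        rw [Set.mem_uIcc]
        right
        exact ⟨le_of_lt ht₂, le_of_lt ht₁⟩
      obtain ⟨s, hs, hΦs⟩ := intermediate_value_uIcc hcΦ hmem
      refine ⟨s, ?_, ?_⟩
      · have hx1 : x ≤ t₁ := le_trans (le_max_left _ _) ht₁x
        have hx2 : x ≤ t₂ := le_trans (le_max_left _ _) ht₂x
        exact le_trans (le_min hx1 hx2) hs.1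
      · have : |Φ s| = 1 := hΦs
        nlinarith [sq_abs (Φ s)]
    -- now build the germ q = (f*gi)^2 - 1 and derive a contradiction
    set q : GermAtTop := (f * gi) * (f * gi) - 1 with hqdef
    have hqmem : q ∈ H.toSubring :=
      sub_mem (mul_mem (mul_mem hf hgi) (mul_mem hf hgi)) (one_mem _)
    set Q : ℝ → ℝ := fun t => Φ t ^ 2 - 1 with hQdef
    have hQq : (Q : GermAtTop) = q := by
      have : Q = Φ * Φ - 1 := by funext t; simp [hQdef]; ring
      rw [this, hqdef, ← hΦg]
      rfl
    by_cases hq0 : q = 0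
    · have hz : Q =ᶠ[atTop] (fun _ => (0:ℝ)) := by
        apply Germ.coe_eq.mp
        rw [hQq, hq0]; rfl
      have hev : ∀ᶠ t in atTop, |Φ t| = 1 := by
        filter_upwards [hz] with t ht
        have : Φ t ^ 2 - 1 = 0 := ht
        nlinarith [sq_abs (Φ t), abs_nonneg (Φ t)]
      obtain ⟨t, ht1, ht2⟩ := (h1'.and_eventually hev).exists
      linarith [ht1, ht2.le, ht2.ge]
    · have hne := germ_eventually_ne H hqmem hq0 hQq
      obtain ⟨t, ht1, ht2⟩ := (hfreq.and_eventually hne).exists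
      exact ht2 ht1
  rcases key with h | h
  · left
    refine ⟨1, one_pos, F, G, hF, hG, ?_⟩
    filter_upwards [h, hFΦG] with t h1 h2
    rw [h2, abs_mul]
    nlinarith [abs_nonneg (G t), abs_nonneg (Φ t)]
  · right
    refine ⟨1, one_pos, G, F, hG, hF, ?_⟩
    filter_upwards [h, hFΦG] with t h1 h2
    rw [h2, abs_mul]
    nlinarith [abs_nonneg (G t), abs_nonneg (Φ t)]
end

section
/- Every Hausdorff field H becomes a linearly ordered field under the ordering: f > 0 iff f(t) > 0 eventually. That is, this relation makes H a linear order compatible with the field operations. -/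
open Filter Set

/-- f > 0 in the sense: f(t) > 0 eventually. -/
def EvPos (f : GermAtTop) : Prop :=
  ∃ g : ℝ → ℝ, (g : GermAtTop) = f ∧ ∀ᶠ t in atTop, 0 < g t

lemma sign_const {F : ℝ → ℝ} {c : ℝ} (hcont : ContinuousOn F (Set.Ioi c))
    (hne : ∀ t, c < t → F t ≠ 0) {s t : ℝ} (hs : c < s) (ht : c < t) (hFs : 0 < F s) :
    0 < F t := by
  by_contra h
  have hneg : F t < 0 := lt_of_le_of_ne (not_lt.mp h) (hne t ht)
  have hsub : Set.uIcc s t ⊆ Set.Ioi c := fun x hx =>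
    lt_of_lt_of_le (lt_min hs ht) hx.1
  have h0 : (0:ℝ) ∈ Set.uIcc (F s) (F t) := by
    rw [Set.mem_uIcc]
    exact Or.inr ⟨le_of_lt hneg, le_of_lt hFs⟩
  obtain ⟨x, hx, hFx⟩ := intermediate_value_uIcc (hcont.mono hsub) h0
  exact hne x (hsub hx) hFx

lemma evPos_coe {g : ℝ → ℝ} : EvPos (g : GermAtTop) ↔ ∀ᶠ t in atTop, 0 < g t := by
  constructor
  · rintro ⟨g', hg', h⟩
    rw [Filter.Germ.coe_eq] at hg'
    filter_upwards [hg', h] with t ht hp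
    rwa [← ht]
  · exact fun h => ⟨g, rfl, h⟩

lemma evPos_not_neg {f : GermAtTop} (hf : EvPos f) : ¬ EvPos (-f) := by
  rintro ⟨G, hG, hGpos⟩
  obtain ⟨F, hF, hFpos⟩ := hf
  have h : (G : GermAtTop) = ((-F : ℝ → ℝ) : GermAtTop) := by
    rw [hG, ← hF]; rfl
  rw [Filter.Germ.coe_eq] at h
  obtain ⟨t, ht1, ht2, ht3⟩ := (h.and (hGpos.and hFpos)).exists
  simp only [Pi.neg_apply] at ht1
  linarith

lemma not_evPos_zero : ¬ EvPos (0 : GermAtTop) := by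
  rintro ⟨g, hg, hpos⟩
  have h : (g : GermAtTop) = ((0 : ℝ → ℝ) : GermAtTop) := by rw [hg]; rfl
  rw [Filter.Germ.coe_eq] at h
  obtain ⟨t, ht1, ht2⟩ := (h.and hpos).exists
  simp only [Pi.zero_apply] at ht1
  linarith

/-- Every Hausdorff field becomes a linearly ordered field under f > 0 iff f(t) > 0
eventually: the positivity predicate satisfies trichotomy on H and is compatible with
addition and multiplication. -/
theorem hausdorffField_linearly_ordered (H : HausdorffField) :
    (∀ f ∈ H.toSubring,
      (EvPos f ∧ f ≠ 0 ∧ ¬ EvPos (-f)) ∨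
      (f = 0 ∧ ¬ EvPos f ∧ ¬ EvPos (-f)) ∨
      (EvPos (-f) ∧ f ≠ 0 ∧ ¬ EvPos f)) ∧
    (∀ f ∈ H.toSubring, ∀ g ∈ H.toSubring,
      EvPos f → EvPos g → EvPos (f + g) ∧ EvPos (f * g)) := by
  constructor
  · intro f hf
    by_cases hf0 : f = 0
    · refine Or.inr (Or.inl ⟨hf0, ?_, ?_⟩) <;> rw [hf0]
      · exact not_evPos_zero
      · rw [neg_zero]; exact not_evPos_zero
    · -- f ≠ 0 : show EvPos f or EvPos (-f)
      obtain ⟨F, hF, a, haF⟩ := H.cont f hf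
      obtain ⟨g, -, hfg⟩ := H.inv_mem f hf hf0
      obtain ⟨G, hG⟩ : ∃ G : ℝ → ℝ, (G : GermAtTop) = g := Quotient.exists_rep g
      have hFG : (F : GermAtTop) * (G : GermAtTop) = 1 := by rw [hF, hG]; exact hfg
      have hFG' : ∀ᶠ t in atTop, F t * G t = 1 := by
        have h2 : ((F * G : ℝ → ℝ) : GermAtTop) = ((1 : ℝ → ℝ) : GermAtTop) := hFG
        rw [Filter.Germ.coe_eq] at h2
        filter_upwards [h2] with t ht using ht
      obtain ⟨b, hb⟩ := eventually_atTop.mp hFG'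
      set c := max a b with hc
      have hne : ∀ t, c < t → F t ≠ 0 := by
        intro t ht h0
        have := hb t (le_of_lt (lt_of_le_of_lt (le_max_right a b) ht))
        rw [h0, zero_mul] at this
        exact one_ne_zero this.symm
      have hcont : ContinuousOn F (Set.Ioi c) :=
        haF.mono (Set.Ioi_subset_Ioi (le_max_left a b))
      have ht0 : c < c + 1 := by linarith
      rcases lt_trichotomy 0 (F (c + 1)) with hpos | h0 | hneg
      · have hev : EvPos f := by
          refine ⟨F, hF, ?_⟩
          filter_upwards [eventually_gt_atTop c] with t ht
          exact sign_const hcont hne ht0 ht hpos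
        exact Or.inl ⟨hev, hf0, evPos_not_neg hev⟩
      · exact absurd h0.symm (hne _ ht0)
      · have hne' : ∀ t, c < t → -F t ≠ 0 := fun t ht => neg_ne_zero.mpr (hne t ht)
        have hev : EvPos (-f) := by
          refine ⟨-F, by rw [← hF]; rfl, ?_⟩
          filter_upwards [eventually_gt_atTop c] with t ht
          exact sign_const hcont.neg hne' ht0 ht (by simpa using hneg)
        exact Or.inr (Or.inr ⟨hev, hf0, fun h => evPos_not_neg h hev⟩)
  · rintro f - g - ⟨F, hF, hFpos⟩ ⟨G, hG, hGpos⟩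
    constructor
    · refine ⟨F + G, by rw [← hF, ← hG]; rfl, ?_⟩
      filter_upwards [hFpos, hGpos] with t h1 h2
      exact add_pos h1 h2
    · refine ⟨F * G, by rw [← hF, ← hG]; rfl, ?_⟩
      filter_upwards [hFpos, hGpos] with t h1 h2
      exact mul_pos h1 h2
end

section
/- If f is a nonzero element of the subring ℝ[x, exp x, log x] of the germ ring C, then there exist k, l, m ∈ ℕ such that f ≍ x^k · e^{lx} · (log x)^m, where ≍ denotes mutual dominance (f ≼ g and g ≼ f). -/
open Filter Set

/-- The germ of the identity function x. -/
noncomputable def Xg : GermAtTop := ((id : ℝ → ℝ) : GermAtTop)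
/-- The germ of exp x. -/
noncomputable def Eg : GermAtTop := ((Real.exp : ℝ → ℝ) : GermAtTop)
/-- The germ of log x. -/
noncomputable def Lg : GermAtTop := ((Real.log : ℝ → ℝ) : GermAtTop)

/-- The subring ℝ[x, exp x, log x] of C. -/
noncomputable def RxExpLog : Subring GermAtTop :=
  Subring.closure ({Xg, Eg, Lg} ∪ Set.range fun r : ℝ => (((fun _ => r) : ℝ → ℝ) : GermAtTop))

/-! ### Auxiliary definitions and lemmas -/

open Asymptotics

/-- The monomial function t ↦ t^k (exp t)^l (log t)^m. -/
noncomputable def monFn (i : ℕ × ℕ × ℕ) : ℝ → ℝ :=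
  fun t => t ^ i.1 * Real.exp t ^ i.2.1 * Real.log t ^ i.2.2

/-- The monomial germ. -/
noncomputable def Mg (i : ℕ × ℕ × ℕ) : GermAtTop := Xg ^ i.1 * Eg ^ i.2.1 * Lg ^ i.2.2

lemma Mg_eq (i : ℕ × ℕ × ℕ) : Mg i = ((monFn i : ℝ → ℝ) : GermAtTop) := by
  simp only [Mg, Xg, Eg, Lg, ← Filter.Germ.coe_pow, ← Filter.Germ.coe_mul]
  rfl

lemma smul_germ (a : ℝ) (y : GermAtTop) :
    a • y = (((fun _ => a) : ℝ → ℝ) : GermAtTop) * y := by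
  induction y using Filter.Germ.inductionOn with
  | _ g =>
    rw [← Filter.Germ.coe_smul, ← Filter.Germ.coe_mul]
    congr 1

lemma Mg_mul (i j : ℕ × ℕ × ℕ) : Mg i * Mg j = Mg (i + j) := by
  simp only [Mg, Prod.fst_add, Prod.snd_add, pow_add]
  ring

lemma mem_span_of_mem_RxExpLog {f : GermAtTop} (hf : f ∈ RxExpLog) :
    f ∈ Submodule.span ℝ (Set.range Mg) := by
  have hMg : ∀ i, Mg i ∈ Submodule.span ℝ (Set.range Mg) := fun i =>
    Submodule.subset_span ⟨i, rfl⟩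
  have hone : (1 : GermAtTop) ∈ Submodule.span ℝ (Set.range Mg) := by
    have : Mg (0, 0, 0) = 1 := by simp [Mg]
    rw [← this]; exact hMg _
  have hmul : ∀ x ∈ Submodule.span ℝ (Set.range Mg), ∀ y ∈ Submodule.span ℝ (Set.range Mg),
      x * y ∈ Submodule.span ℝ (Set.range Mg) := by
    intro x hx
    induction hx using Submodule.span_induction with
    | mem x hx =>
      obtain ⟨i, rfl⟩ := hx
      intro y hy
      induction hy using Submodule.span_induction with
      | mem y hy => obtain ⟨j, rfl⟩ := hy; rw [Mg_mul]; exact hMg _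
      | zero => rw [mul_zero]; exact Submodule.zero_mem _
      | add y z _ _ py pz => rw [mul_add]; exact Submodule.add_mem _ py pz
      | smul a y _ py =>
        rw [smul_germ, mul_left_comm, ← smul_germ]
        exact Submodule.smul_mem _ _ py
    | zero => intro y hy; rw [zero_mul]; exact Submodule.zero_mem _
    | add x z _ _ px pz => intro y hy; rw [add_mul]; exact Submodule.add_mem _ (px y hy) (pz y hy)
    | smul a x _ px =>
      intro y hy
      rw [smul_germ, mul_assoc, ← smul_germ]
      exact Submodule.smul_mem _ _ (px y hy)
  refine Subring.closure_induction ?_ (Submodule.zero_mem _) hone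
    (fun x y _ _ px py => Submodule.add_mem _ px py)
    (fun x _ px => Submodule.neg_mem _ px)
    (fun x y _ _ px py => hmul x px y py) hf
  rintro x (hx | ⟨r, rfl⟩)
  · have hx' : x = Xg ∨ x = Eg ∨ x = Lg := by simpa using hx
    rcases hx' with rfl | rfl | rfl
    · have : Mg (1, 0, 0) = Xg := by simp [Mg]
      rw [← this]; exact hMg _
    · have : Mg (0, 1, 0) = Eg := by simp [Mg]
      rw [← this]; exact hMg _
    · have : Mg (0, 0, 1) = Lg := by simp [Mg]
      rw [← this]; exact hMg _
  · show (((fun _ => r) : ℝ → ℝ) : GermAtTop) ∈ Submodule.span ℝ (Set.range Mg)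
    have : (((fun _ => r) : ℝ → ℝ) : GermAtTop) = r • 1 := by
      rw [smul_germ, mul_one]
    rw [this]
    exact Submodule.smul_mem _ _ hone

/-! ### Analytic lemmas -/

lemma polylog_lt_exp (n p : ℕ) :
    (fun x : ℝ => x ^ n * Real.log x ^ p) =o[atTop] Real.exp := by
  have h1 : (fun x : ℝ => x ^ n * Real.log x ^ p) =O[atTop] fun x => x ^ (n + p) := by
    rw [isBigO_iff]
    refine ⟨1, ?_⟩
    filter_upwards [eventually_ge_atTop (1 : ℝ)] with x hx
    have hx0 : (0:ℝ) < x := by linarith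
    have hl0 : 0 ≤ Real.log x := Real.log_nonneg hx
    have hlx : Real.log x ≤ x := (Real.log_le_sub_one_of_pos hx0).trans (by linarith)
    rw [one_mul, pow_add, Real.norm_eq_abs, Real.norm_eq_abs,
      abs_of_nonneg (by positivity), abs_of_nonneg (by positivity)]
    gcongr
  exact h1.trans_isLittleO Real.isLittleO_pow_exp_atTop

lemma one_lt_pow_log (d : ℕ) (hd : 0 < d) :
    (fun _ : ℝ => (1 : ℝ)) =o[atTop] fun x => Real.log x ^ d := by
  rw [isLittleO_const_left]
  right
  have : Tendsto (fun x : ℝ => Real.log x ^ d) atTop atTop :=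
    (tendsto_pow_atTop hd.ne').comp Real.tendsto_log_atTop
  exact tendsto_abs_atTop_atTop.comp this

lemma polylog_lt_polylog {k m K M : ℕ} (h : k < K ∨ k = K ∧ m < M) :
    (fun x : ℝ => x ^ k * Real.log x ^ m) =o[atTop]
      fun x => x ^ K * Real.log x ^ M := by
  rcases h with hk | ⟨rfl, hm⟩
  · rcases le_or_gt m M with hmM | hMm
    · -- x^k =o x^K, log^m =O log^M
      have h1 : (fun x : ℝ => x ^ k) =o[atTop] fun x => x ^ K :=
        isLittleO_pow_pow_atTop_of_lt hk
      have h2 : (fun x : ℝ => Real.log x ^ m) =O[atTop] fun x => Real.log x ^ M := by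
        rw [isBigO_iff]
        refine ⟨1, ?_⟩
        filter_upwards [Real.tendsto_log_atTop.eventually_ge_atTop 1] with x hlx
        have h0 : (0:ℝ) ≤ Real.log x := by linarith
        rw [one_mul, Real.norm_eq_abs, Real.norm_eq_abs,
          abs_of_nonneg (by positivity), abs_of_nonneg (by positivity)]
        gcongr
      exact h1.mul_isBigO h2
    · -- log^(m-M) =o x ≤ x^(K-k); multiply by x^k log^M
      have h1 : (fun x : ℝ => Real.log x ^ (m - M)) =o[atTop] fun x => x ^ (K - k) := by
        refine Real.isLittleO_pow_log_id_atTop.trans_isBigO ?_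
        rw [isBigO_iff]
        refine ⟨1, ?_⟩
        filter_upwards [eventually_ge_atTop (1 : ℝ)] with x hx
        rw [one_mul, Real.norm_eq_abs, Real.norm_eq_abs, id,
          abs_of_nonneg (by positivity), abs_of_nonneg (by positivity)]
        exact le_self_pow₀ hx (by omega)
      have h2 := h1.mul_isBigO
        (isBigO_refl (fun x : ℝ => x ^ k * Real.log x ^ M) atTop)
      refine h2.congr (fun x => ?_) (fun x => ?_)
      · rw [mul_comm, mul_assoc, ← pow_add, Nat.add_sub_cancel' hMm.le]
      · rw [← mul_assoc, ← pow_add, Nat.sub_add_cancel hk.le]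
  · -- 1 =o log^(M-m); multiply by x^k log^m
    have h1 := (one_lt_pow_log (M - m) (by omega)).mul_isBigO
      (isBigO_refl (fun x : ℝ => x ^ k * Real.log x ^ m) atTop)
    refine h1.congr (fun x => ?_) (fun x => ?_)
    · ring
    · rw [mul_comm, mul_assoc, ← pow_add, Nat.add_sub_cancel' hm.le]

lemma littleO_monFn {k l m K L M : ℕ}
    (h : l < L ∨ l = L ∧ (k < K ∨ k = K ∧ m < M)) :
    monFn (k, l, m) =o[atTop] monFn (K, L, M) := by
  rcases h with hl | ⟨rfl, hkm⟩
  · -- exponential dominates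
    have h2 : (fun x : ℝ => x ^ k * Real.log x ^ m) =o[atTop]
        fun x => Real.exp x ^ (L - l) := by
      refine (polylog_lt_exp k m).trans_isBigO ?_
      rw [isBigO_iff]
      refine ⟨1, ?_⟩
      filter_upwards [eventually_ge_atTop (0 : ℝ)] with x hx
      have he : 1 ≤ Real.exp x := Real.one_le_exp hx
      rw [one_mul, Real.norm_eq_abs, Real.norm_eq_abs,
        abs_of_nonneg (by positivity), abs_of_nonneg (by positivity)]
      exact le_self_pow₀ he (by omega)
    have h3 := h2.mul_isBigO (isBigO_refl (fun x : ℝ => Real.exp x ^ l) atTop)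
    have h4 : (fun x : ℝ => Real.exp x ^ (L - l) * Real.exp x ^ l) =O[atTop]
        monFn (K, L, M) := by
      rw [isBigO_iff]
      refine ⟨1, ?_⟩
      filter_upwards [eventually_ge_atTop (1 : ℝ),
        Real.tendsto_log_atTop.eventually_ge_atTop 1] with x hx hlx
      have he : 0 ≤ Real.exp x := (Real.exp_pos x).le
      have h0 : (0:ℝ) ≤ Real.log x := by linarith
      rw [one_mul, ← pow_add, show L - l + l = L by omega, Real.norm_eq_abs,
        Real.norm_eq_abs, monFn, abs_of_nonneg (by positivity),
        abs_of_nonneg (by positivity)]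
      calc Real.exp x ^ L = 1 * Real.exp x ^ L * 1 := by ring
        _ ≤ x ^ K * Real.exp x ^ L * Real.log x ^ M := by
            gcongr <;> [exact one_le_pow₀ hx; exact one_le_pow₀ hlx]
    refine (h3.trans_isBigO h4).congr (fun x => ?_) (fun x => rfl)
    simp only [monFn]; ring
  · -- same exponential part
    have h1 := (polylog_lt_polylog hkm).mul_isBigO
      (isBigO_refl (fun x : ℝ => Real.exp x ^ l) atTop)
    refine h1.congr (fun x => ?_) (fun x => ?_) <;> (simp only [monFn]; ring)

/-- Lex key used for selecting the dominating monomial. -/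
def lexKey (i : ℕ × ℕ × ℕ) : ℕ ×ₗ (ℕ ×ₗ ℕ) := toLex (i.2.1, toLex (i.1, i.2.2))

lemma lexKey_inj : Function.Injective lexKey := by
  rintro ⟨a, b, c⟩ ⟨a', b', c'⟩ h
  simp only [lexKey, toLex] at h
  obtain ⟨h1, h2, h3⟩ : b = b' ∧ a = a' ∧ c = c' := by
    have := congrArg (fun p : ℕ ×ₗ (ℕ ×ₗ ℕ) => (ofLex p).1) h
    have := congrArg (fun p : ℕ ×ₗ (ℕ ×ₗ ℕ) => (ofLex (ofLex p).2).1) h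
    have := congrArg (fun p : ℕ ×ₗ (ℕ ×ₗ ℕ) => (ofLex (ofLex p).2).2) h
    exact ⟨congrArg (fun p : ℕ × Lex (ℕ × ℕ) => p.1) h, congrArg (fun p : ℕ × Lex (ℕ × ℕ) => (ofLex p.2).1) h,
      congrArg (fun p : ℕ × Lex (ℕ × ℕ) => (ofLex p.2).2) h⟩
  simp [h1, h2, h3]

lemma littleO_of_lexKey_lt {i j : ℕ × ℕ × ℕ} (h : lexKey i < lexKey j) :
    monFn i =o[atTop] monFn j := by
  obtain ⟨k, l, m⟩ := i
  obtain ⟨K, L, M⟩ := j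
  apply littleO_monFn
  simp only [lexKey] at h
  rw [Prod.Lex.lt_iff] at h
  rcases h with h | ⟨h1, h2⟩
  · exact Or.inl h
  · rw [Prod.Lex.lt_iff] at h2
    exact Or.inr ⟨h1, h2⟩

lemma dominates_of_isBigO {F G : ℝ → ℝ} (h : F =O[atTop] G) :
    Dominates (F : GermAtTop) (G : GermAtTop) := by
  obtain ⟨c, hc0, hc⟩ := h.exists_pos
  refine ⟨c, hc0, F, G, rfl, rfl, ?_⟩
  filter_upwards [hc.bound] with t ht
  simpa [Real.norm_eq_abs] using ht

/-- Every nonzero f ∈ ℝ[x, exp x, log x] satisfies f ≍ x^k e^{l x} (log x)^m for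
some k, l, m ∈ ℕ. -/
theorem asymp_monomial (f : GermAtTop) (hf : f ∈ RxExpLog) (hf0 : f ≠ 0) :
    ∃ k l m : ℕ, Dominates f (Xg ^ k * Eg ^ l * Lg ^ m) ∧
      Dominates (Xg ^ k * Eg ^ l * Lg ^ m) f := by
  obtain ⟨c, hc⟩ := Finsupp.mem_span_range_iff_exists_finsupp.1 (mem_span_of_mem_RxExpLog hf)
  -- express f as the germ of an explicit finite sum of monomials
  have hsum : ∀ s : Finset (ℕ × ℕ × ℕ),
      (∑ i ∈ s, c i • Mg i) =
        (((fun t => ∑ i ∈ s, c i * monFn i t) : ℝ → ℝ) : GermAtTop) := by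
    intro s
    induction s using Finset.induction_on with
    | empty => simp; rfl
    | @insert a s hnot ih =>
      rw [Finset.sum_insert hnot, ih, Mg_eq, ← Filter.Germ.coe_smul, ← Filter.Germ.coe_add]
      congr 1
      funext t
      simp [Finset.sum_insert hnot]
  set F : ℝ → ℝ := fun t => ∑ i ∈ c.support, c i * monFn i t with hFdef
  have hF : f = (F : GermAtTop) := by
    rw [← hc, Finsupp.sum, hsum]
  have hsupp : c.support.Nonempty := by
    rcases Finset.eq_empty_or_nonempty c.support with h | h
    · exfalso; apply hf0
      rw [← hc, Finsupp.sum, h, Finset.sum_empty]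
    · exact h
  obtain ⟨top, htop, hmax⟩ := c.support.exists_max_image lexKey hsupp
  have hctop : c top ≠ 0 := Finsupp.mem_support_iff.1 htop
  -- every other monomial is little-o of the top one
  have hlittle : ∀ i ∈ c.support, i ≠ top → monFn i =o[atTop] monFn top := by
    intro i hi hne
    exact littleO_of_lexKey_lt (lt_of_le_of_ne (hmax i hi) (fun h => hne (lexKey_inj h)))
  -- F is big-Theta of the top monomial
  have h1 : (fun t => ∑ i ∈ c.support.erase top, c i * monFn i t) =o[atTop] monFn top := by
    refine IsLittleO.fun_sum fun i hi => ?_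
    exact (hlittle i (Finset.mem_of_mem_erase hi) (Finset.ne_of_mem_erase hi)).const_mul_left _
  have heq : F = fun t => (∑ i ∈ c.support.erase top, c i * monFn i t) + c top * monFn top t := by
    funext t
    rw [hFdef]
    exact (Finset.sum_erase_add _ _ htop).symm
  have h2 : (fun t => c top * monFn top t) =Θ[atTop] monFn top :=
    (isTheta_const_mul_left hctop).2 (isTheta_refl _ _)
  have hO1 : F =O[atTop] monFn top := by
    rw [heq]; exact h1.add_isBigO h2.isBigO
  have hO2 : monFn top =O[atTop] F := by
    rw [heq]
    have h1' : (fun t => ∑ i ∈ c.support.erase top, c i * monFn i t) =o[atTop]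
        fun t => c top * monFn top t := h1.trans_isBigO h2.symm.isBigO
    exact h2.symm.isBigO.trans h1'.right_isBigO_add
  refine ⟨top.1, top.2.1, top.2.2, ?_, ?_⟩
  · have := dominates_of_isBigO hO1
    rwa [← hF, ← Mg_eq, Mg] at this
  · have := dominates_of_isBigO hO2
    rwa [← hF, ← Mg_eq, Mg] at this
end

section
/- In the Hahn field R[[M]] over ℝ with monomial group M, for every series ε with ε ≺ 1 (i.e., all monomials in the support of ε are < 1), the family (εⁿ/n!)_{n∈ℕ} is summable, and E(ε) := Σ_n εⁿ/n! satisfies E(ε+δ) = E(ε)·E(δ) for all ε, δ ≺ 1. -/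
open Set

section Aux

variable {Γ : Type*} [AddCommGroup Γ] [LinearOrder Γ] [IsOrderedAddMonoid Γ]

theorem aux_orderTop_pos (x : HahnSeries Γ ℝ) (hx : (x.support : Set Γ) ⊆ Set.Ioi 0) :
    0 < x.orderTop := by
  rcases eq_or_ne x 0 with rfl | h
  · rw [HahnSeries.orderTop_zero]; exact WithTop.coe_lt_top 0 |>.trans_le le_rfl |> fun _ => by
      exact (WithTop.lt_top_iff_ne_top.mpr (by simp)).trans_le le_rfl
  · rw [HahnSeries.orderTop_of_ne_zero h]
    exact_mod_cast hx (x.isWF_support.min_mem (HahnSeries.support_nonempty_iff.mpr h))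

/-- The exponential summable family. -/
noncomputable def expFam (x : HahnSeries Γ ℝ) (hx : 0 < x.orderTop) :
    HahnSeries.SummableFamily Γ ℝ ℕ where
  toFun n := ((n.factorial : ℝ)⁻¹) • x ^ n
  isPWO_iUnion_support' := by
    refine (HahnSeries.SummableFamily.isPWO_iUnion_support_powers (HahnSeries.zero_le_orderTop_iff.mp <| le_of_lt hx)).mono (Set.iUnion_mono fun n => ?_)
    intro g hg
    simp only [HahnSeries.mem_support, HahnSeries.coeff_smul, smul_eq_mul] at hg ⊢
    exact fun h => hg (by rw [h, mul_zero])
  finite_co_support' g := by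
    refine (HahnSeries.SummableFamily.pow_finite_co_support hx g).subset fun n hn => ?_
    simp only [Set.mem_setOf_eq, HahnSeries.coeff_smul, smul_eq_mul] at hn
    simp only [Set.mem_setOf_eq]
    exact fun h => hn (by rw [h, mul_zero])

theorem expFam_apply (x : HahnSeries Γ ℝ) (hx : 0 < x.orderTop) (n : ℕ) :
    expFam x hx n = ((n.factorial : ℝ)⁻¹) • x ^ n := rfl

theorem fact_inv_choose {n k : ℕ} (h : k ≤ n) :
    ((n.factorial : ℝ)⁻¹) * (n.choose k : ℝ) =
      ((k.factorial : ℝ)⁻¹) * (((n - k).factorial : ℝ)⁻¹) := by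
  rw [Nat.cast_choose ℝ h]
  have h1 : (n.factorial : ℝ) ≠ 0 := Nat.cast_ne_zero.mpr n.factorial_ne_zero
  have h2 : (k.factorial : ℝ) ≠ 0 := Nat.cast_ne_zero.mpr k.factorial_ne_zero
  have h3 : ((n - k).factorial : ℝ) ≠ 0 := Nat.cast_ne_zero.mpr (n - k).factorial_ne_zero
  field_simp

theorem hahn_smul_mul_smul (a b : ℝ) (x y : HahnSeries Γ ℝ) :
    (a • x) * (b • y) = (a * b) • (x * y) := by
  rw [← HahnSeries.single_zero_mul_eq_smul, ← HahnSeries.single_zero_mul_eq_smul,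
    ← HahnSeries.single_zero_mul_eq_smul]
  have : (HahnSeries.single (0 : Γ) (a * b)) =
      HahnSeries.single (0 : Γ) a * HahnSeries.single (0 : Γ) b := by
    rw [HahnSeries.single_mul_single, zero_add]
  rw [this, mul_mul_mul_comm]

theorem binom_step (x y : HahnSeries Γ ℝ) (n : ℕ) :
    ((n.factorial : ℝ)⁻¹) • (x + y) ^ n =
      ∑ p ∈ Finset.HasAntidiagonal.antidiagonal n,
        (((p.1.factorial : ℝ)⁻¹) • x ^ p.1) * (((p.2.factorial : ℝ)⁻¹) • y ^ p.2) := by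
  rw [(Commute.all x y).add_pow', Finset.smul_sum]
  refine Finset.sum_congr rfl fun p hp => ?_
  have hpn : p.1 + p.2 = n := Finset.HasAntidiagonal.mem_antidiagonal.mp hp
  rw [hahn_smul_mul_smul, ← Nat.cast_smul_eq_nsmul ℝ, smul_smul]
  congr 1
  have h2 : n - p.1 = p.2 := by omega
  rw [← h2]
  exact fact_inv_choose (by omega)

end Aux

/-- In the Hahn field ℝ[[M]], for every infinitesimal ε (all monomials of its support
are ≺ 1, i.e. all exponents are positive), the family (εⁿ/n!) is summable, and
E(ε) := Σ εⁿ/n! satisfies E(ε+δ) = E(ε)·E(δ). -/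
theorem hahn_exp_infinitesimal (Γ : Type*) [AddCommGroup Γ] [LinearOrder Γ] [IsOrderedAddMonoid Γ]
    (ε δ : HahnSeries Γ ℝ)
    (hε : (ε.support : Set Γ) ⊆ Set.Ioi 0) (hδ : (δ.support : Set Γ) ⊆ Set.Ioi 0) :
    (∀ g : Γ, {n : ℕ | (((n.factorial : ℝ)⁻¹) • ε ^ n).coeff g ≠ 0}.Finite) ∧
    (⋃ n : ℕ, ((((n.factorial : ℝ)⁻¹) • ε ^ n).support : Set Γ)).IsPWO ∧
    (∀ A B C : HahnSeries Γ ℝ,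
      (∀ g : Γ, A.coeff g = ∑ᶠ n : ℕ, (((n.factorial : ℝ)⁻¹) • ε ^ n).coeff g) →
      (∀ g : Γ, B.coeff g = ∑ᶠ n : ℕ, (((n.factorial : ℝ)⁻¹) • δ ^ n).coeff g) →
      (∀ g : Γ, C.coeff g = ∑ᶠ n : ℕ, (((n.factorial : ℝ)⁻¹) • (ε + δ) ^ n).coeff g) →
      C = A * B) := by
  have hεo : 0 < ε.orderTop := aux_orderTop_pos ε hε
  have hδo : 0 < δ.orderTop := aux_orderTop_pos δ hδ
  have hsumo : 0 < (ε + δ).orderTop := by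
    refine aux_orderTop_pos _ (fun g hg => ?_)
    have := HahnSeries.support_add_subset (x := ε) (y := δ) hg
    rcases this with h | h
    · exact hε h
    · exact hδ h
  set s := expFam ε hεo with hs
  set t := expFam δ hδo with ht
  set u := expFam (ε + δ) hsumo with hu
  refine ⟨fun g => s.finite_co_support' g, s.isPWO_iUnion_support', ?_⟩
  intro A B C hA hB hC
  have hAeq : A = s.hsum := HahnSeries.coeff_injective (funext fun g => hA g)
  have hBeq : B = t.hsum := HahnSeries.coeff_injective (funext fun g => hB g)
  have hCeq : C = u.hsum := HahnSeries.coeff_injective (funext fun g => hC g)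
  subst hAeq hBeq hCeq
  -- the product family
  set P := HahnSeries.SummableFamily.smul s t with hP
  have hPfun : ∀ p : ℕ × ℕ, P p = s p.1 * t p.2 := fun p =>
    HahnSeries.of_symm_smul_of_eq_mul
  have key : u.hsum = P.hsum := by
    refine HahnSeries.coeff_injective (funext fun g => ?_)
    -- F is the coefficient function of the product family
    set F : ℕ × ℕ → ℝ := fun p => (P p).coeff g with hF
    have hFsupp : (Function.support F).Finite := P.finite_co_support' g
    -- LHS: group by total degree
    have hterm : ∀ n : ℕ, (u n).coeff g = ∑ p ∈ Finset.HasAntidiagonal.antidiagonal n, F p := by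
      intro n
      rw [hu, expFam_apply, binom_step]
      rw [show (∑ p ∈ Finset.HasAntidiagonal.antidiagonal n,
          (((p.1.factorial : ℝ)⁻¹) • ε ^ p.1) * (((p.2.factorial : ℝ)⁻¹) • δ ^ p.2)).coeff g
          = ∑ p ∈ Finset.HasAntidiagonal.antidiagonal n,
          ((((p.1.factorial : ℝ)⁻¹) • ε ^ p.1) * (((p.2.factorial : ℝ)⁻¹) • δ ^ p.2)).coeff g
        from map_sum (HahnSeries.coeff.addMonoidHom g) _ _]
      exact Finset.sum_congr rfl fun p _ => by simp only [hF]; rw [hPfun]; rfl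
    set T : Finset ℕ := hFsupp.toFinset.image (fun p => p.1 + p.2) with hT
    have hL : u.hsum.coeff g = ∑ n ∈ T, ∑ p ∈ Finset.HasAntidiagonal.antidiagonal n, F p := by
      rw [HahnSeries.SummableFamily.coeff_hsum]
      rw [finsum_eq_finset_sum_of_support_subset _ (s := T) ?_]
      · exact Finset.sum_congr rfl fun n _ => hterm n
      · intro n hn
        rw [Function.mem_support, hterm n] at hn
        obtain ⟨p, hp, hpne⟩ := Finset.exists_ne_zero_of_sum_ne_zero hn
        rw [Finset.mem_coe, hT, Finset.mem_image]
        exact ⟨p, hFsupp.mem_toFinset.mpr hpne, (Finset.HasAntidiagonal.mem_antidiagonal.mp hp)⟩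
    have hR : P.hsum.coeff g = ∑ p ∈ T.biUnion Finset.HasAntidiagonal.antidiagonal, F p := by
      rw [HahnSeries.SummableFamily.coeff_hsum]
      refine finsum_eq_finset_sum_of_support_subset _ ?_
      intro p hp
      rw [Function.mem_support] at hp
      rw [Finset.coe_biUnion]
      refine Set.mem_biUnion (x := p.1 + p.2) ?_ ?_
      · rw [Finset.mem_coe, hT, Finset.mem_image]
        exact ⟨p, hFsupp.mem_toFinset.mpr hp, rfl⟩
      · simp [Finset.HasAntidiagonal.mem_antidiagonal]
    rw [hL, hR, Finset.sum_biUnion]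
    intro m _ n _ hmn
    refine Finset.disjoint_left.mpr fun p hpm hpn => hmn ?_
    rw [Finset.HasAntidiagonal.mem_antidiagonal] at hpm hpn
    omega
  rw [key, hP]
  rw [HahnSeries.SummableFamily.smul_hsum, HahnSeries.of_symm_smul_of_eq_mul]
end
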